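/- Let c, d > 0 and define H(z) := c^{1/3}·d^{2/3}·(2c/d − 1 + (1+z)³)^{2/3} / 2^{2/3} for z ≥ 0 (the base 2c/d − 1 + (1+z)³ ≥ 2c/d > 0 is positive there, and indeed on a neighbourhood of 0). Define the cosmological-time derivatives of H as functions of z by Ḣ(z) := −(1+z)·H(z)·H'(z) and Ḧ(z) := −(1+z)·H(z)·(d/dz)Ḣ(z). Then H satisfies the initial conditions H(0) = c and H'(0) = d, and solves J₀₀ = 0 on [0,∞), i.e. 6·Ḣ(z)² − 12·Ḧ(z)·H(z) − 36·Ḣ(z)·H(z)² = 0 for all z ≥ 0. -/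

import Mathlib

private lemma rpow_div_three (x : ℝ) (hx : 0 < x) (n : ℕ) :
    x ^ ((n : ℝ)/3) = (x ^ ((1:ℝ)/3)) ^ n := by
  rw [← Real.rpow_natCast (x ^ ((1:ℝ)/3)) n, ← Real.rpow_mul hx.le]
  ring_nf

private lemma hasDerivAt_base (a z : ℝ) :
    HasDerivAt (fun w : ℝ => a + (1 + w) ^ 3) (3 * (1 + z) ^ 2) z := by
  have h1 : HasDerivAt (fun w : ℝ => 1 + w) 1 z := by
    simpa using (hasDerivAt_id z).const_add 1
  simpa using (h1.pow 3).const_add a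

set_option maxHeartbeats 1000000 in
/-- The solution of `J₀₀ = 0` in redshift: `H(z) = c^{1/3} d^{2/3} (2c/d - 1 + (1+z)³)^{2/3}/2^{2/3}`
has the base positive for `z ≥ 0`, satisfies `H(0) = c`, `H'(0) = d`, and solves
`6Ḣ² - 12ḦH - 36ḢH² = 0` for all `z ≥ 0`, where `Ḣ = -(1+z)H H'` and
`Ḧ = -(1+z)H (Ḣ)'`. -/
theorem stmt_15 (c d : ℝ) (hc : 0 < c) (hd : 0 < d) :
    let H : ℝ → ℝ := fun z =>
      c ^ ((1:ℝ)/3) * d ^ ((2:ℝ)/3) * (2*c/d - 1 + (1+z)^3) ^ ((2:ℝ)/3) / 2 ^ ((2:ℝ)/3)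
    let Hdot : ℝ → ℝ := fun z => -(1+z) * H z * deriv H z
    let Hddot : ℝ → ℝ := fun z => -(1+z) * H z * deriv Hdot z
    (∀ z : ℝ, 0 ≤ z → 0 < 2*c/d - 1 + (1+z)^3) ∧
    H 0 = c ∧ deriv H 0 = d ∧
    (∀ z : ℝ, 0 ≤ z →
      6 * Hdot z ^ 2 - 12 * Hddot z * H z - 36 * Hdot z * H z ^ 2 = 0) := by
  intro H Hdot Hddot
  have hcd : (0:ℝ) < 2*c/d := by positivity
  have hpos : ∀ z : ℝ, 0 ≤ z → 0 < 2*c/d - 1 + (1+z)^3 := by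
    intro z hz
    nlinarith [mul_nonneg (mul_nonneg hz hz) hz, sq_nonneg z]
  -- derivative of H at any point with positive base
  set G : ℝ → ℝ := fun w =>
    c ^ ((1:ℝ)/3) * d ^ ((2:ℝ)/3) *
      (3 * (1+w)^2 * ((2:ℝ)/3) * (2*c/d - 1 + (1+w)^3) ^ ((2:ℝ)/3 - 1)) / 2 ^ ((2:ℝ)/3)
    with hGdef
  have hHD : ∀ w : ℝ, (2*c/d - 1 + (1+w)^3) ≠ 0 → HasDerivAt H (G w) w := by
    intro w hw
    exact ((((hasDerivAt_base (2*c/d - 1) w).rpow_const (Or.inl hw)).const_mul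
      (c ^ ((1:ℝ)/3) * d ^ ((2:ℝ)/3))).div_const (2 ^ ((2:ℝ)/3)))
  have hderivH : ∀ w : ℝ, 0 < 2*c/d - 1 + (1+w)^3 → deriv H w = G w :=
    fun w hw => (hHD w hw.ne').deriv
  -- positive constants
  have h2 : (0:ℝ) < (2:ℝ) ^ ((2:ℝ)/3) := by positivity
  have hd23 : (0:ℝ) < d ^ ((2:ℝ)/3) := by positivity
  have hc13 : (0:ℝ) < c ^ ((1:ℝ)/3) := by positivity
  refine ⟨hpos, ?_, ?_, ?_⟩
  · -- H 0 = c
    show c ^ ((1:ℝ)/3) * d ^ ((2:ℝ)/3) * (2*c/d - 1 + (1+0)^3) ^ ((2:ℝ)/3) / 2 ^ ((2:ℝ)/3) = c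
    have hb0 : 2*c/d - 1 + (1+(0:ℝ))^3 = 2*c/d := by norm_num
    rw [hb0, Real.div_rpow (by positivity) hd.le, Real.mul_rpow (by norm_num) hc.le]
    have hcc : c ^ ((1:ℝ)/3) * c ^ ((2:ℝ)/3) = c := by
      rw [← Real.rpow_add hc]; norm_num
    field_simp
    linear_combination hcc
  · -- deriv H 0 = d
    have hb0 : 2*c/d - 1 + (1+(0:ℝ))^3 = 2*c/d := by norm_num
    have h0 : deriv H 0 = G 0 := hderivH 0 (by rw [hb0]; exact hcd)
    rw [h0, hGdef]
    simp only [hb0]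
    rw [show (2:ℝ)/3 - 1 = -(1/3) by norm_num, Real.rpow_neg hcd.le,
      Real.div_rpow (by positivity) hd.le, Real.mul_rpow (by norm_num) hc.le]
    have hdd' : d ^ ((2:ℝ)/3) * d ^ ((1:ℝ)/3) = d := by
      rw [← Real.rpow_add hd]; norm_num
    have h22 : (2:ℝ) ^ ((2:ℝ)/3) * (2:ℝ) ^ ((1:ℝ)/3) = 2 := by
      rw [← Real.rpow_add (by norm_num : (0:ℝ) < 2)]; norm_num
    have h213 : (0:ℝ) < (2:ℝ) ^ ((1:ℝ)/3) := by positivity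
    have hd13 : (0:ℝ) < d ^ ((1:ℝ)/3) := by positivity
    field_simp
    linear_combination 2*hdd' - d*h22
  · -- the ODE
    intro z hz
    set t := 2*c/d - 1 + (1+z)^3 with htdef
    have ht : 0 < t := hpos z hz
    set s := t ^ ((1:ℝ)/3) with hsdef
    have hs : 0 < s := Real.rpow_pos_of_pos ht _
    have e2 : t ^ ((2:ℝ)/3) = s ^ 2 := by
      have := rpow_div_three t ht 2; norm_num at this; exact this
    have e3 : t ^ ((2:ℝ)/3 - 1) = s⁻¹ := by
      rw [show (2:ℝ)/3 - 1 = -(1/3) by norm_num, Real.rpow_neg ht.le]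
    have e4 : t ^ ((2:ℝ)/3 - 1 - 1) = (s ^ 4)⁻¹ := by
      rw [show (2:ℝ)/3 - 1 - 1 = -(4/3) by norm_num, Real.rpow_neg ht.le]
      congr 1
      have := rpow_div_three t ht 4; norm_num at this; exact this
    -- closed form for Hdot near z
    have hO : IsOpen {w : ℝ | 0 < 2*c/d - 1 + (1+w)^3} :=
      isOpen_lt continuous_const (by continuity)
    have hev : Hdot =ᶠ[nhds z] fun w => -(1+w) * H w * G w := by
      filter_upwards [hO.mem_nhds ht] with w hw
      show -(1+w) * H w * deriv H w = -(1+w) * H w * G w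
      rw [hderivH w hw]
    have f1 : HasDerivAt (fun w : ℝ => -(1+w)) (-1) z := by
      exact ((hasDerivAt_id z).const_add 1).neg
    have f2 : HasDerivAt H (G z) z := hHD z ht.ne'
    -- derivative of G
    have h33 : HasDerivAt (fun w : ℝ => 3 * (1+w)^2) (3 * (2*(1+z))) z := by
      have h1 : HasDerivAt (fun w : ℝ => 1 + w) 1 z := by
        simpa using (hasDerivAt_id z).const_add 1
      simpa using (h1.pow 2).const_mul 3
    have hrp : HasDerivAt (fun w : ℝ => (2*c/d - 1 + (1+w)^3) ^ ((2:ℝ)/3 - 1))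
        (3 * (1+z)^2 * ((2:ℝ)/3 - 1) * t ^ ((2:ℝ)/3 - 1 - 1)) z :=
      (hasDerivAt_base (2*c/d - 1) z).rpow_const (Or.inl ht.ne')
    have f3 : HasDerivAt G
        ((c ^ ((1:ℝ)/3) * d ^ ((2:ℝ)/3)) *
          ((3 * (2*(1+z)) * ((2:ℝ)/3)) * t ^ ((2:ℝ)/3 - 1) +
            (3 * (1+z)^2 * ((2:ℝ)/3)) *
              (3 * (1+z)^2 * ((2:ℝ)/3 - 1) * t ^ ((2:ℝ)/3 - 1 - 1))) / 2 ^ ((2:ℝ)/3)) z := by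
      exact (((h33.mul_const ((2:ℝ)/3)).mul hrp).const_mul
        (c ^ ((1:ℝ)/3) * d ^ ((2:ℝ)/3))).div_const (2 ^ ((2:ℝ)/3))
    have fF : HasDerivAt (fun w => -(1+w) * H w * G w)
        (((-1) * H z + -(1+z) * G z) * G z + (-(1+z) * H z) *
          ((c ^ ((1:ℝ)/3) * d ^ ((2:ℝ)/3)) *
            ((3 * (2*(1+z)) * ((2:ℝ)/3)) * t ^ ((2:ℝ)/3 - 1) +
              (3 * (1+z)^2 * ((2:ℝ)/3)) *
                (3 * (1+z)^2 * ((2:ℝ)/3 - 1) * t ^ ((2:ℝ)/3 - 1 - 1))) / 2 ^ ((2:ℝ)/3))) z :=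
      (f1.mul f2).mul f3
    have hdHdot : deriv Hdot z = _ := hev.deriv_eq.trans fF.deriv
    -- now unfold everything
    have hHz : H z = c ^ ((1:ℝ)/3) * d ^ ((2:ℝ)/3) * t ^ ((2:ℝ)/3) / 2 ^ ((2:ℝ)/3) := rfl
    have hGz : G z = c ^ ((1:ℝ)/3) * d ^ ((2:ℝ)/3) *
        (3 * (1+z)^2 * ((2:ℝ)/3) * t ^ ((2:ℝ)/3 - 1)) / 2 ^ ((2:ℝ)/3) := rfl
    have hHdotz : Hdot z = -(1+z) * H z * deriv H z := rfl
    have hHddotz : Hddot z = -(1+z) * H z * deriv Hdot z := rfl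
    rw [hHdotz, hHddotz, hderivH z ht, hdHdot, hGz, hHz, e2, e3, e4]
    clear hdHdot fF f3 hrp h33 f2 f1 hev hO hHz hGz hHdotz hHddotz hderivH hHD hGdef
    clear_value G
    clear G
    clear_value Hddot Hdot H
    clear Hddot Hdot H
    set P := c ^ ((1:ℝ)/3)
    set Q := d ^ ((2:ℝ)/3)
    set B := (2:ℝ) ^ ((2:ℝ)/3)
    field_simp
    ring
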